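/- arXiv:0704.1640 — 2 statements merged into one kernel-verified Lean document; each statement's English description precedes it below -/
import Mathlib

section
/- Let Ω ⊆ ℂ^n be open, u : Ω → ℝ a C² function and C ≥ 0 a constant. Assume: (i) for every x ∈ Ω and every a ∈ ℂ^n, D²u(x)(a,a) + D²u(x)(i·a, i·a) ≥ 0 (u is subharmonic along every complex line, i.e. its complex Hessian is positive semidefinite); (ii) for every x ∈ Ω and every h ∈ ℂ^n with the closed segment [x−h, x+h] contained in Ω, u(x+h) + u(x−h) − 2u(x) ≤ C|h|². Then for every x ∈ Ω and every h ∈ ℂ^n one has |D²u(x)(h,h)| ≤ C|h|², where D²u(x) denotes the real second derivative of u at x on ℂ^n ≅ ℝ^{2n}. -/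
/-- One-variable key lemma: if `g''` is everywhere `> K` on `[-t,t]`, then the symmetric
second difference at scale `t` exceeds `K t²`. -/
lemma key_second_diff (g g' g'' : ℝ → ℝ) (t K : ℝ) (ht : 0 < t)
    (hg' : ∀ s ∈ Set.Icc (-t) t, HasDerivAt g (g' s) s)
    (hg'' : ∀ s ∈ Set.Icc (-t) t, HasDerivAt g' (g'' s) s)
    (hK : ∀ s ∈ Set.Icc (-t) t, K < g'' s) :
    K * t ^ 2 < g t + g (-t) - 2 * g 0 := by
  set F : ℝ → ℝ := fun s => g s + g (-s) - 2 * g 0 - K * s ^ 2 with hF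
  set F' : ℝ → ℝ := fun s => g' s - g' (-s) - 2 * K * s with hF'
  have hmem : ∀ s ∈ Set.Icc (0:ℝ) t, s ∈ Set.Icc (-t) t := by
    intro s hs; exact ⟨le_trans (by linarith [ht.le]) hs.1, hs.2⟩
  have hmemneg : ∀ s ∈ Set.Icc (0:ℝ) t, -s ∈ Set.Icc (-t) t := by
    intro s hs; constructor <;> [linarith [hs.2]; linarith [hs.1, ht.le]]
  have hdF : ∀ s ∈ Set.Icc (0:ℝ) t, HasDerivAt F (F' s) s := by
    intro s hs
    have h1 := hg' s (hmem s hs)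
    have h2 : HasDerivAt (fun s : ℝ => g (-s)) (g' (-s) * (-1)) s :=
      (hg' (-s) (hmemneg s hs)).comp s (hasDerivAt_neg s)
    have h3 : HasDerivAt (fun s : ℝ => K * s ^ 2) (K * (2 * s ^ 1)) s :=
      (hasDerivAt_pow 2 s).const_mul K
    have := ((h1.add h2).sub_const (2 * g 0)).sub h3
    refine this.congr_deriv ?_
    simp [hF']; ring
  have hdF' : ∀ s ∈ Set.Icc (0:ℝ) t, HasDerivAt F' (g'' s + g'' (-s) - 2 * K) s := by
    intro s hs
    have h1 := hg'' s (hmem s hs)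
    have h2 : HasDerivAt (fun s : ℝ => g' (-s)) (g'' (-s) * (-1)) s :=
      (hg'' (-s) (hmemneg s hs)).comp s (hasDerivAt_neg s)
    have h3 : HasDerivAt (fun s : ℝ => 2 * K * s) (2 * K) s := by
      simpa using (hasDerivAt_id s).const_mul (2 * K)
    have := (h1.sub h2).sub h3
    refine this.congr_deriv ?_
    ring
  have hintmem : ∀ s ∈ interior (Set.Icc (0:ℝ) t), s ∈ Set.Icc (0:ℝ) t :=
    fun s hs => interior_subset hs
  -- F' is strictly monotone on [0,t]
  have hmonoF' : StrictMonoOn F' (Set.Icc 0 t) := by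
    apply strictMonoOn_of_deriv_pos (convex_Icc 0 t)
    · exact fun s hs => (hdF' s hs).continuousAt.continuousWithinAt
    · intro s hs
      rw [(hdF' s (hintmem s hs)).deriv]
      have k1 := hK s (hmem s (hintmem s hs))
      have k2 := hK (-s) (hmemneg s (hintmem s hs))
      linarith
  have hF'0 : F' 0 = 0 := by simp [hF']
  have hF'pos : ∀ s ∈ interior (Set.Icc (0:ℝ) t), 0 < F' s := by
    intro s hs
    rw [interior_Icc] at hs
    have := hmonoF' (Set.left_mem_Icc.2 ht.le) (hintmem s (by rw [interior_Icc]; exact hs)) hs.1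
    linarith [hF'0]
  have hmonoF : StrictMonoOn F (Set.Icc 0 t) := by
    apply strictMonoOn_of_deriv_pos (convex_Icc 0 t)
    · exact fun s hs => (hdF s hs).continuousAt.continuousWithinAt
    · intro s hs
      rw [(hdF s (hintmem s hs)).deriv]
      exact hF'pos s hs
  have := hmonoF (Set.left_mem_Icc.2 ht.le) (Set.right_mem_Icc.2 ht.le) ht
  have hF0 : F 0 = 0 := by
    show g 0 + g (-0) - 2 * g 0 - K * 0 ^ 2 = 0
    rw [neg_zero]; ring
  rw [hF0] at this
  simp only [hF] at this
  linarith

set_option maxHeartbeats 1000000 in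
/-- **Two-sided Hessian bound from plurisubharmonicity and a one-sided second difference
bound.** Let `Ω ⊆ ℂ^n` be open, `u : Ω → ℝ` a `C²` function and `C ≥ 0`. Assume:
(i) the complex Hessian of `u` is positive semidefinite, i.e.
`D²u(x)(a,a) + D²u(x)(i·a, i·a) ≥ 0` for all `x ∈ Ω`, `a ∈ ℂ^n`; and
(ii) `u(x+h) + u(x−h) − 2u(x) ≤ C|h|²` whenever the segment `[x−h, x+h]` lies in `Ω`.
Then `|D²u(x)(h,h)| ≤ C|h|²` for every `x ∈ Ω` and every `h ∈ ℂ^n`. -/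
theorem hessian_bound_of_psh_and_second_difference_bound
    (n : ℕ) (Ω : Set (EuclideanSpace ℂ (Fin n))) (hΩ : IsOpen Ω)
    (u : EuclideanSpace ℂ (Fin n) → ℝ) (hu : ContDiffOn ℝ 2 u Ω)
    (C : ℝ) (hC : 0 ≤ C)
    (hpsh : ∀ x ∈ Ω, ∀ a : EuclideanSpace ℂ (Fin n),
      0 ≤ fderiv ℝ (fderiv ℝ u) x a a
        + fderiv ℝ (fderiv ℝ u) x (Complex.I • a) (Complex.I • a))
    (hsec : ∀ x ∈ Ω, ∀ h : EuclideanSpace ℂ (Fin n),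
      segment ℝ (x - h) (x + h) ⊆ Ω →
      u (x + h) + u (x - h) - 2 * u x ≤ C * ‖h‖ ^ 2) :
    ∀ x ∈ Ω, ∀ h : EuclideanSpace ℂ (Fin n),
      |fderiv ℝ (fderiv ℝ u) x h h| ≤ C * ‖h‖ ^ 2 := by
  set Q : EuclideanSpace ℂ (Fin n) → _ := fderiv ℝ (fderiv ℝ u) with hQdef
  have hdiffu : ∀ y ∈ Ω, DifferentiableAt ℝ u y := fun y hy =>
    (hu.differentiableOn (by norm_num)).differentiableAt (hΩ.mem_nhds hy)
  have hfd : ContDiffOn ℝ 1 (fderiv ℝ u) Ω := hu.fderiv_of_isOpen hΩ (by norm_num)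
  have hdifffd : ∀ y ∈ Ω, DifferentiableAt ℝ (fderiv ℝ u) y := fun y hy =>
    (hfd.differentiableOn (by norm_num)).differentiableAt (hΩ.mem_nhds hy)
  have hQcont : ContinuousOn Q Ω := hfd.continuousOn_fderiv_of_isOpen hΩ le_rfl
  -- Step 1: the upper bound Q x h h ≤ C‖h‖² for all x ∈ Ω, h.
  have upper : ∀ x ∈ Ω, ∀ h : EuclideanSpace ℂ (Fin n), Q x h h ≤ C * ‖h‖ ^ 2 := by
    intro x hx h
    by_contra hcon
    push_neg at hcon
    set K := C * ‖h‖ ^ 2 with hK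
    have hh : h ≠ 0 := by
      rintro rfl
      rw [hK, norm_zero] at hcon
      norm_num at hcon
    have hnh : 0 < ‖h‖ := norm_pos_iff.2 hh
    -- continuity of y ↦ Q y h h at x
    have hφ : ContinuousAt (fun y => Q y h h) x := by
      have h1 : ContinuousAt Q x := hQcont.continuousAt (hΩ.mem_nhds hx)
      have h2 : Continuous fun (M : EuclideanSpace ℂ (Fin n) →L[ℝ]
          EuclideanSpace ℂ (Fin n) →L[ℝ] ℝ) => M h h :=
        ((ContinuousLinearMap.apply ℝ ℝ h).comp
          (ContinuousLinearMap.apply ℝ (EuclideanSpace ℂ (Fin n) →L[ℝ] ℝ) h)).continuous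
      exact h2.continuousAt.comp h1
    have hev : ∀ᶠ y in nhds x, K < Q y h h ∧ y ∈ Ω := by
      filter_upwards [hφ.eventually_const_lt hcon, hΩ.mem_nhds hx] with y h1 h2
      exact ⟨h1, h2⟩
    obtain ⟨ε, hε, hball⟩ := Metric.eventually_nhds_iff_ball.1 hev
    set t := ε / (2 * ‖h‖) with htdef
    have ht : 0 < t := by positivity
    have hmemball : ∀ s ∈ Set.Icc (-t) t, x + s • h ∈ Metric.ball x ε := by
      intro s hs
      have habs : |s| ≤ t := abs_le.2 hs
      simp only [Metric.mem_ball, dist_eq_norm]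
      have : ‖x + s • h - x‖ = |s| * ‖h‖ := by
        rw [add_sub_cancel_left, norm_smul, Real.norm_eq_abs]
      rw [this]
      calc |s| * ‖h‖ ≤ t * ‖h‖ := mul_le_mul_of_nonneg_right habs (norm_nonneg h)
        _ = ε / 2 := by rw [htdef, div_mul_eq_mul_div, mul_div_mul_right _ _ hnh.ne']
        _ < ε := by linarith
    have hmemΩ : ∀ s ∈ Set.Icc (-t) t, x + s • h ∈ Ω := fun s hs =>
      (hball _ (hmemball s hs)).2
    -- the 1-D functions
    set γ : ℝ → EuclideanSpace ℂ (Fin n) := fun s => x + s • h with hγdef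
    have hγ : ∀ s : ℝ, HasDerivAt γ h s := fun s => by
      simpa [hγdef] using ((hasDerivAt_id s).smul_const h).const_add x
    have hg' : ∀ s ∈ Set.Icc (-t) t,
        HasDerivAt (fun s => u (γ s)) (fderiv ℝ u (γ s) h) s := by
      intro s hs
      exact ((hdiffu _ (hmemΩ s hs)).hasFDerivAt).comp_hasDerivAt s (hγ s)
    have hg'' : ∀ s ∈ Set.Icc (-t) t,
        HasDerivAt (fun s => fderiv ℝ u (γ s) h) (Q (γ s) h h) s := by
      intro s hs
      have h1 : HasDerivAt (fun s => fderiv ℝ u (γ s)) (Q (γ s) h) s :=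
        ((hdifffd _ (hmemΩ s hs)).hasFDerivAt).comp_hasDerivAt s (hγ s)
      have := h1.clm_apply (hasDerivAt_const s h)
      simpa using this
    have hKlt : ∀ s ∈ Set.Icc (-t) t, K < Q (γ s) h h := fun s hs =>
      (hball _ (hmemball s hs)).1
    have hkey := key_second_diff (fun s => u (γ s)) (fun s => fderiv ℝ u (γ s) h)
      (fun s => Q (γ s) h h) t K ht hg' hg'' hKlt
    -- apply hsec with t•h
    have hseg : segment ℝ (x - t • h) (x + t • h) ⊆ Ω := by
      intro y hy
      have hsub : segment ℝ (x - t • h) (x + t • h) ⊆ Metric.ball x ε := by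
        apply (convex_ball x ε).segment_subset
        · have := hmemball (-t) ⟨le_refl _, by linarith⟩
          simpa [sub_eq_add_neg, neg_smul] using this
        · exact hmemball t ⟨by linarith, le_refl _⟩
      exact (hball _ (hsub hy)).2
    have hs2 := hsec x hx (t • h) hseg
    have hnorm : ‖t • h‖ ^ 2 = t ^ 2 * ‖h‖ ^ 2 := by
      rw [norm_smul, Real.norm_eq_abs, mul_pow, sq_abs]
    rw [hnorm] at hs2
    have hkey' : K * t ^ 2 < u (x + t • h) + u (x - t • h) - 2 * u x := by
      simpa [hγdef, neg_smul, sub_eq_add_neg] using hkey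
    rw [hK] at hkey'
    have heq : C * ‖h‖ ^ 2 * t ^ 2 = C * (t ^ 2 * ‖h‖ ^ 2) := by ring
    linarith
  -- Step 2: combine with psh for the lower bound
  intro x hx h
  have h1 := upper x hx h
  have h2 := upper x hx (Complex.I • h)
  have h3 := hpsh x hx h
  have hnormI : ‖Complex.I • h‖ = ‖h‖ := by
    rw [norm_smul, Complex.norm_I, one_mul]
  rw [hnormI] at h2
  rw [abs_le]
  constructor
  · linarith
  · exact h1
end

section
/- Let U ⊆ ℝ^m be open, K ⊆ U compact, and Φ : ℝ^p × U → ℝ^m a C¹ map such that Φ(0, y) = y for every y ∈ U, Φ(λ, y) ∈ U whenever y ∈ K and |λ| ≤ 1, and such that for every y ∈ K the partial differential ∂Φ/∂λ(0, y) : ℝ^p → ℝ^m is surjective. Suppose f : U → ℝ and C ≥ 0 satisfy |f(Φ(λ, y)) − f(y)| ≤ C|λ| for every y ∈ K and every λ ∈ ℝ^p with |λ| ≤ 1. Then there exist ε > 0 and C' ≥ 0 such that for every y ∈ K and every y' ∈ U with |y' − y| < ε one has |f(y') − f(y)| ≤ C'|y' − y|; in particular f is Lipschitz continuous on a neighborhood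 of K. -/
open Set Metric

theorem lipschitz_of_flow_estimates_aux
    {E F : Type*} [NormedAddCommGroup E] [NormedSpace ℝ E] [CompleteSpace E]
    [NormedAddCommGroup F] [NormedSpace ℝ F] [CompleteSpace F]
    (U : Set F) (hU : IsOpen U) (K : Set F) (hK : IsCompact K) (hKU : K ⊆ U)
    (Φ : E × F → F) (hΦ : ContDiffOn ℝ 1 Φ (Set.univ ×ˢ U))
    (hΦ0 : ∀ y ∈ U, Φ (0, y) = y)
    (hsurj : ∀ y ∈ K, Function.Surjective (fderiv ℝ (fun l => Φ (l, y)) 0))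
    (f : F → ℝ) (C : ℝ) (hC : 0 ≤ C)
    (hf : ∀ y ∈ K, ∀ l : E, ‖l‖ ≤ 1 → |f (Φ (l, y)) - f y| ≤ C * ‖l‖) :
    ∃ ε > (0:ℝ), ∃ C' ≥ (0:ℝ), ∀ y ∈ K, ∀ y' : F, ‖y' - y‖ < ε →
      |f y' - f y| ≤ C' * ‖y' - y‖ := by
  classical
  rcases subsingleton_or_nontrivial F with hF | hF
  · refine ⟨1, one_pos, 0, le_rfl, fun y _ y' _ => ?_⟩
    simp [Subsingleton.elim y' y]
  rcases K.eq_empty_or_nonempty with rfl | hKne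
  · exact ⟨1, one_pos, 0, le_rfl, fun y hy => absurd hy (Set.notMem_empty y)⟩
  have hdom : IsOpen ((Set.univ : Set E) ×ˢ U) := isOpen_univ.prod hU
  have hΦdiff : DifferentiableOn ℝ Φ (Set.univ ×ˢ U) := hΦ.differentiableOn one_ne_zero
  set D : E × F → E →L[ℝ] F := fun q => (fderiv ℝ Φ q).comp (ContinuousLinearMap.inl ℝ E F)
    with hDdef
  have hDcont : ContinuousOn D (Set.univ ×ˢ U) := by
    have h1 := hΦ.continuousOn_fderiv_of_isOpen hdom le_rfl
    exact ((ContinuousLinearMap.compL ℝ E (E × F) F).flip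
      (ContinuousLinearMap.inl ℝ E F)).continuous.comp_continuousOn h1
  have hDer : ∀ y ∈ U, ∀ l : E, HasFDerivAt (fun l' => Φ (l', y)) (D (l, y)) l := by
    intro y hy l
    have h1 : HasFDerivAt Φ (fderiv ℝ Φ (l, y)) (l, y) :=
      (hΦdiff.differentiableAt (hdom.mem_nhds ⟨Set.mem_univ _, hy⟩)).hasFDerivAt
    exact h1.comp l (hasFDerivAt_prodMk_left l y)
  -- pointwise statement
  have key : ∀ y₀ ∈ K, ∃ r > (0:ℝ), ∃ A, 0 ≤ A ∧ ∀ y ∈ K, dist y y₀ < r →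
      ∀ y' : F, ‖y' - y‖ < r → |f y' - f y| ≤ A * ‖y' - y‖ := by
    intro y₀ hy₀K
    have hy₀U : y₀ ∈ U := hKU hy₀K
    set L : E →L[ℝ] F := D (0, y₀) with hLdef
    have hLsurj : LinearMap.range (L : E →ₗ[ℝ] F) = ⊤ := by
      rw [LinearMap.range_eq_top]
      have h0 : fderiv ℝ (fun l => Φ (l, y₀)) 0 = L := (hDer y₀ hy₀U 0).fderiv
      rw [← h0]; exact hsurj y₀ hy₀K
    set S := L.nonlinearRightInverseOfSurjective hLsurj with hSdef
    have hN : (0:ℝ) < (S.nnnorm : ℝ) := by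
      exact_mod_cast ContinuousLinearMap.nonlinearRightInverseOfSurjective_nnnorm_pos L hLsurj
    set c : NNReal := S.nnnorm⁻¹ / 2 with hcdef
    have hc_real : (c : ℝ) = ((S.nnnorm : ℝ))⁻¹ / 2 := by
      rw [hcdef]; push_cast; ring
    have hcpos : (0:ℝ) < (c : ℝ) := by rw [hc_real]; positivity
    set σ : ℝ := ((S.nnnorm : ℝ))⁻¹ - (c : ℝ) with hσdef
    have hσ : σ = ((S.nnnorm : ℝ))⁻¹ / 2 := by rw [hσdef, hc_real]; ring
    have hσpos : 0 < σ := by rw [hσ]; positivity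
    -- continuity of D at (0, y₀)
    have hDat : ContinuousAt D (0, y₀) :=
      hDcont.continuousAt (hdom.mem_nhds ⟨Set.mem_univ _, hy₀U⟩)
    obtain ⟨δ₁, hδ₁pos, hδ₁⟩ := Metric.continuousAt_iff.1 hDat (c : ℝ) hcpos
    obtain ⟨δ₂, hδ₂pos, hδ₂⟩ := Metric.isOpen_iff.1 hU y₀ hy₀U
    set r : ℝ := min (min (δ₁ / 2) (δ₂ / 2)) 1 with hrdef
    have hrpos : 0 < r := by
      apply lt_min (lt_min (by linarith) (by linarith)) one_pos
    have hr1 : r ≤ 1 := min_le_right _ _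
    have hrδ₁ : r < δ₁ := lt_of_le_of_lt ((min_le_left _ _).trans (min_le_left _ _)) (by linarith)
    have hrδ₂ : r < δ₂ := lt_of_le_of_lt ((min_le_left _ _).trans (min_le_right _ _)) (by linarith)
    have hball : ∀ (l : E) (y : F), ‖l‖ ≤ r → dist y y₀ ≤ r →
        y ∈ U ∧ ‖D (l, y) - L‖ ≤ (c : ℝ) := by
      intro l y hl hy
      have hyU : y ∈ U := hδ₂ (mem_ball.2 (lt_of_le_of_lt hy hrδ₂))
      refine ⟨hyU, ?_⟩
      have hdist : dist (l, y) ((0 : E), y₀) < δ₁ := by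
        rw [Prod.dist_eq]
        apply max_lt
        · rw [dist_zero_right]; exact lt_of_le_of_lt hl hrδ₁
        · exact lt_of_le_of_lt hy hrδ₁
      have := hδ₁ hdist
      rw [dist_eq_norm] at this
      exact this.le
    -- the approximation property
    have happrox : ∀ y ∈ K, dist y y₀ ≤ r →
        ApproximatesLinearOn (fun l => Φ (l, y)) L (closedBall (0:E) r) c := by
      intro y hyK hyr
      have hyU : y ∈ U := (hball 0 y (by simp [hrpos.le]) hyr).1
      intro x hx x' hx'
      have hder : ∀ z ∈ closedBall (0:E) r,
          HasFDerivWithinAt (fun l => Φ (l, y) - L l) (D (z, y) - L) (closedBall (0:E) r) z := by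
        intro z _
        exact ((hDer y hyU z).sub L.hasFDerivAt).hasFDerivWithinAt
      have hbound : ∀ z ∈ closedBall (0:E) r, ‖D (z, y) - L‖ ≤ (c : ℝ) := by
        intro z hz
        exact (hball z y (by rwa [mem_closedBall, dist_zero_right] at hz) hyr).2
      have := Convex.norm_image_sub_le_of_norm_hasFDerivWithin_le hder hbound
        (convex_closedBall _ _) hx' hx
      calc ‖Φ (x, y) - Φ (x', y) - L (x - x')‖
          = ‖(Φ (x, y) - L x) - (Φ (x', y) - L x')‖ := by rw [map_sub]; congr 1; abel
        _ ≤ (c : ℝ) * ‖x - x'‖ := this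
    -- conclusion
    refine ⟨min r (σ * r), lt_min hrpos (by positivity), C / σ, by positivity, ?_⟩
    intro y hyK hyy₀ y' hy'
    rcases eq_or_ne y' y with rfl | hne
    · simp
    have hy'ypos : 0 < ‖y' - y‖ := by
      rw [norm_pos_iff]; exact sub_ne_zero.2 hne
    set ε' : ℝ := ‖y' - y‖ / σ with hε'def
    have hε'pos : 0 < ε' := by positivity
    have hε'r : ε' ≤ r := by
      rw [hε'def, div_le_iff₀ hσpos]
      have : ‖y' - y‖ < σ * r := lt_of_lt_of_le hy' (min_le_right _ _)
      linarith [this]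
    have hyr : dist y y₀ ≤ r := le_of_lt (lt_of_lt_of_le hyy₀ (min_le_left _ _))
    have happ := (happrox y hyK hyr).mono_set
      (closedBall_subset_closedBall hε'r : closedBall (0:E) ε' ⊆ closedBall 0 r)
    have hsurjon := happ.surjOn_closedBall_of_nonlinearRightInverse S hε'pos.le
      (Set.Subset.refl _)
    have hyU : y ∈ U := (hball 0 y (by simp [hrpos.le]) hyr).1
    have hy'mem : y' ∈ closedBall (Φ (0, y)) ((((S.nnnorm : ℝ))⁻¹ - (c:ℝ)) * ε') := by
      rw [hΦ0 y hyU, mem_closedBall, dist_eq_norm]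
      have heq : (((S.nnnorm : ℝ))⁻¹ - (c:ℝ)) * ε' = ‖y' - y‖ := by
        rw [hε'def, ← hσdef]
        field_simp
      rw [heq]
    obtain ⟨l, hl, hΦl⟩ := hsurjon hy'mem
    have hlε : ‖l‖ ≤ ε' := by
      have := mem_closedBall.1 hl
      rwa [dist_zero_right] at this
    have hl1 : ‖l‖ ≤ 1 := hlε.trans (hε'r.trans hr1)
    have hbound := hf y hyK l hl1
    simp only [show Φ (l, y) = y' from hΦl] at hbound
    calc |f y' - f y| ≤ C * ‖l‖ := hbound
      _ ≤ C * ε' := mul_le_mul_of_nonneg_left hlε hC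
      _ = C / σ * ‖y' - y‖ := by rw [hε'def]; field_simp
  -- compactness argument
  choose! r hrpos A hA0 hA using key
  obtain ⟨t, htK, htcover⟩ := hK.elim_nhds_subcover (fun y₀ => ball y₀ (r y₀))
    (fun y₀ hy₀ => ball_mem_nhds y₀ (hrpos y₀ hy₀))
  have htne : t.Nonempty := by
    rcases hKne with ⟨y, hy⟩
    rcases Set.mem_iUnion₂.1 (htcover hy) with ⟨i, hi, _⟩
    exact ⟨i, hi⟩
  refine ⟨t.inf' htne (fun y₀ => r y₀), ?_, t.sup' htne (fun y₀ => A y₀), ?_, ?_⟩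
  · exact (Finset.lt_inf'_iff htne).2 fun b hb => hrpos b (htK b hb)
  · rcases htne with ⟨i, hi⟩
    exact le_trans (hA0 i (htK i hi)) (Finset.le_sup' _ hi)
  · intro y hy y' hy'
    rcases Set.mem_iUnion₂.1 (htcover hy) with ⟨i, hi, hyi⟩
    have h1 := hA i (htK i hi) y hy (mem_ball.1 hyi) y'
      (lt_of_lt_of_le hy' (Finset.inf'_le _ hi))
    exact le_trans h1 (mul_le_mul_of_nonneg_right (Finset.le_sup' _ hi) (norm_nonneg _))



/-- **Lipschitz continuity from one-sided estimates along a spanning family of flows.**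
Let `U ⊆ ℝ^m` be open, `K ⊆ U` compact, and `Φ : ℝ^p × U → ℝ^m` a `C¹` map with
`Φ(0, y) = y` on `U`, with `Φ(λ, y) ∈ U` for `y ∈ K`, `|λ| ≤ 1`, and such that the partial
differential `∂Φ/∂λ(0, y)` is surjective for every `y ∈ K`. If `f : U → ℝ` satisfies
`|f(Φ(λ, y)) − f(y)| ≤ C|λ|` for all `y ∈ K` and `|λ| ≤ 1`, then `f` satisfies a Lipschitz
estimate `|f(y') − f(y)| ≤ C'|y' − y|` for `y ∈ K` and `y' ∈ U` with `|y' − y| < ε`, for some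
`ε > 0` and `C' ≥ 0`. -/
theorem lipschitz_of_flow_estimates
    (m p : ℕ) (U : Set (EuclideanSpace ℝ (Fin m))) (hU : IsOpen U)
    (K : Set (EuclideanSpace ℝ (Fin m))) (hK : IsCompact K) (hKU : K ⊆ U)
    (Φ : EuclideanSpace ℝ (Fin p) × EuclideanSpace ℝ (Fin m) → EuclideanSpace ℝ (Fin m))
    (hΦ : ContDiffOn ℝ 1 Φ (Set.univ ×ˢ U))
    (hΦ0 : ∀ y ∈ U, Φ (0, y) = y)
    (hΦU : ∀ y ∈ K, ∀ l : EuclideanSpace ℝ (Fin p), ‖l‖ ≤ 1 → Φ (l, y) ∈ U)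
    (hsurj : ∀ y ∈ K, Function.Surjective (fderiv ℝ (fun l => Φ (l, y)) 0))
    (f : EuclideanSpace ℝ (Fin m) → ℝ) (C : ℝ) (hC : 0 ≤ C)
    (hf : ∀ y ∈ K, ∀ l : EuclideanSpace ℝ (Fin p), ‖l‖ ≤ 1 →
      |f (Φ (l, y)) - f y| ≤ C * ‖l‖) :
    ∃ ε > (0 : ℝ), ∃ C' ≥ (0 : ℝ), ∀ y ∈ K, ∀ y' ∈ U,
      ‖y' - y‖ < ε → |f y' - f y| ≤ C' * ‖y' - y‖ := by
  obtain ⟨ε, hε, C', hC', h⟩ :=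
    lipschitz_of_flow_estimates_aux U hU K hK hKU Φ hΦ hΦ0 hsurj f C hC hf
  exact ⟨ε, hε, C', hC', fun y hy y' _ h' => h y hy y' h'⟩
end
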